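/- Let A be a Banach synaptic algebra (a norm-complete synaptic algebra), and for a, b ∈ A let a ∨ₛ b and a ∧ₛ b be the elements of A whose spectral resolutions are given by p_{a∨ₛb,λ} := p_{a,λ} ∧ p_{b,λ} and p_{a∧ₛb,λ} := ⋀_{λ<μ∈ℝ}(p_{a,μ} ∨ p_{b,μ}) for λ ∈ ℝ. Then a ∧ₛ b is the infimum and a ∨ₛ b is the supremum of a and b in the spectral order ≤ₛ, so that (A, ≤ₛ) is a lattice; moreover, under the spectral order, the set E = {e ∈ A : 0 ≤ e ≤ 1} of effects is a sublattice of A. -/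

import Mathlib

open Filter Topology

/-- The order-unit norm associated with an order relation `le` on a real algebra:
`‖a‖ = inf {λ > 0 : −λ ≤ a ≤ λ}`. -/
noncomputable def ouNorm {R : Type*} [Ring R] [Algebra ℝ R] (le : R → R → Prop) (a : R) : ℝ :=
  sInf {l : ℝ | 0 < l ∧ le (algebraMap ℝ R (-l)) a ∧ le a (algebraMap ℝ R l)}

/-- A synaptic algebra: a real linear subspace `A` (containing `1`) of a unital associative
algebra `R` over `ℝ` (a complex algebra is in particular a real algebra), equipped with a
partial order making it an Archimedean partially ordered real linear space with order unit `1`,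
and satisfying axioms SA1–SA8.  The square root (SA5) and the carrier (SA6) are bundled as
data together with their defining properties. -/
structure SynapticAlgebra (R : Type*) [Ring R] [Algebra ℝ R] where
  A : Submodule ℝ R
  one_mem : (1 : R) ∈ A
  /-- the synaptic order (meaningful on elements of `A`) -/
  le : R → R → Prop
  -- SA1 : Archimedean partially ordered real linear space with order unit 1
  le_refl : ∀ a ∈ A, le a a
  le_antisymm : ∀ a ∈ A, ∀ b ∈ A, le a b → le b a → a = b
  le_trans : ∀ a ∈ A, ∀ b ∈ A, ∀ c ∈ A, le a b → le b c → le a c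
  add_le_add_right : ∀ a ∈ A, ∀ b ∈ A, ∀ c ∈ A, le a b → le (a + c) (b + c)
  smul_nonneg : ∀ r : ℝ, 0 ≤ r → ∀ a ∈ A, le 0 a → le 0 (r • a)
  arch : ∀ a ∈ A, ∀ b ∈ A, (∀ n : ℕ, le ((n : ℝ) • a) b) → le a 0
  one_order_unit : ∀ a ∈ A, ∃ n : ℕ, le a ((n : ℝ) • (1 : R))
  zero_ne_one : (0 : R) ≠ 1
  -- SA2
  sq_mem : ∀ a ∈ A, a * a ∈ A
  sq_nn : ∀ a ∈ A, le 0 (a * a)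
  -- SA3
  quad_mem : ∀ a ∈ A, ∀ b ∈ A, a * b * a ∈ A
  quad_nn : ∀ a ∈ A, ∀ b ∈ A, le 0 a → le 0 b → le 0 (a * b * a)
  -- SA4
  quad_zero : ∀ a ∈ A, ∀ b ∈ A, le 0 b → a * b * a = 0 → a * b = 0 ∧ b * a = 0
  -- SA5 : square roots
  sqrt : R → R
  sqrt_mem : ∀ a ∈ A, le 0 a → sqrt a ∈ A
  sqrt_nn : ∀ a ∈ A, le 0 a → le 0 (sqrt a)
  sqrt_sq : ∀ a ∈ A, le 0 a → sqrt a * sqrt a = a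
  sqrt_bicomm : ∀ a ∈ A, le 0 a → ∀ b ∈ A, a * b = b * a → sqrt a * b = b * sqrt a
  sqrt_unique : ∀ a ∈ A, le 0 a → ∀ b ∈ A, le 0 b → b * b = a →
    (∀ c ∈ A, a * c = c * a → b * c = c * b) → b = sqrt a
  -- SA6 : carriers
  carr : R → R
  carr_mem : ∀ a ∈ A, carr a ∈ A
  carr_idem : ∀ a ∈ A, carr a * carr a = carr a
  carr_spec : ∀ a ∈ A, ∀ b ∈ A, (a * b = 0 ↔ carr a * b = 0)
  -- SA7
  inv_exists : ∀ a ∈ A, le 1 a → ∃ b ∈ A, a * b = 1 ∧ b * a = 1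
  -- SA8
  comm_closed : ∀ a ∈ A, ∀ b ∈ A, ∀ f : ℕ → R, (∀ n, f n ∈ A) →
    (∀ n, le (f n) (f (n + 1))) → (∀ m n, f m * f n = f n * f m) →
    (∀ n, f n * b = b * f n) →
    Filter.Tendsto (fun n => ouNorm le (a - f n)) Filter.atTop (nhds 0) →
    a * b = b * a

namespace SynapticAlgebra

variable {R : Type*} [Ring R] [Algebra ℝ R] (S : SynapticAlgebra R)

/-- `|a| := (a²)^{1/2}`. -/
def absval (a : R) : R := S.sqrt (a * a)

/-- The positive part `a⁺ := (|a| + a)/2`. -/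
noncomputable def pospart (a : R) : R := (2⁻¹ : ℝ) • (S.absval a + a)

/-- The spectral resolution `p_{a,λ} := 1 − ((a − λ)⁺)°`. -/
noncomputable def specProj (a : R) (l : ℝ) : R :=
  1 - S.carr (S.pospart (a - algebraMap ℝ R l))

/-- The spectral order: `a ≤ₛ b` iff `p_{b,λ} ≤ p_{a,λ}` for all real `λ`. -/
noncomputable def specLE (a b : R) : Prop :=
  ∀ l : ℝ, S.le (S.specProj b l) (S.specProj a l)

/-- Projections of the synaptic algebra. -/
def IsProj (p : R) : Prop := p ∈ S.A ∧ p * p = p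

/-- The set `E = {e ∈ A : 0 ≤ e ≤ 1}` of effects. -/
def effects : Set R := {e | e ∈ S.A ∧ S.le 0 e ∧ S.le e 1}

/-- `p` is the infimum of the set `T` in the orthomodular lattice `P` of projections. -/
def IsProjInf (p : R) (T : Set R) : Prop :=
  S.IsProj p ∧ (∀ q ∈ T, S.le p q) ∧ ∀ r, S.IsProj r → (∀ q ∈ T, S.le r q) → S.le r p

/-- `p` is the supremum of the set `T` in the orthomodular lattice `P` of projections. -/
def IsProjSup (p : R) (T : Set R) : Prop :=
  S.IsProj p ∧ (∀ q ∈ T, S.le q p) ∧ ∀ r, S.IsProj r → (∀ q ∈ T, S.le q r) → S.le p r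

/-- A Banach (norm-complete) synaptic algebra: every Cauchy sequence in `A`
(w.r.t. the order-unit norm) converges in norm to an element of `A`. -/
noncomputable def IsBanach : Prop :=
  ∀ f : ℕ → R, (∀ n, f n ∈ S.A) →
    (∀ ε : ℝ, 0 < ε → ∃ N : ℕ, ∀ m ≥ N, ∀ n ≥ N, ouNorm S.le (f m - f n) < ε) →
    ∃ a ∈ S.A, Filter.Tendsto (fun n => ouNorm S.le (a - f n)) Filter.atTop (nhds 0)

/-- The `λ`-eigenprojection `d_{a,λ} := 1 − (a − λ)°`. -/
noncomputable def eigenProj (a : R) (l : ℝ) : R := 1 - S.carr (a - algebraMap ℝ R l)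

/-- The bicommutant `CC(a)` (within `A`). -/
def Bicomm (a : R) : Set R :=
  {b | b ∈ S.A ∧ ∀ c ∈ S.A, a * c = c * a → b * c = c * b}

/-- Projections `p` and `q` are exchanged by a symmetry (`s² = 1`, `sps = q`). -/
def ExchBySymm (p q : R) : Prop := ∃ s ∈ S.A, s * s = 1 ∧ s * p * s = q

/-- The dimension equivalence on projections: a finite chain of projections, consecutive
ones exchanged by symmetries. -/
def DimEquiv (p q : R) : Prop :=
  ∃ (n : ℕ) (c : ℕ → R), c 0 = p ∧ c n = q ∧ (∀ i ≤ n, S.IsProj (c i)) ∧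
    ∀ i < n, S.ExchBySymm (c i) (c (i + 1))

/-- `A` is of finite type iff every projection is finite. -/
def FiniteType : Prop :=
  ∀ p, S.IsProj p → ∀ q, S.IsProj q → S.DimEquiv q p → S.le q p → q = p

/-- The projection lattice `P` is a complete orthomodular lattice: every set of projections
has an infimum and a supremum in `P`. -/
def ProjComplete : Prop :=
  ∀ T : Set R, (∀ p ∈ T, S.IsProj p) →
    (∃ q, S.IsProjInf q T) ∧ (∃ q, S.IsProjSup q T)

/-- A bounded resolution of identity with bound `K`. -/
def IsBoundedResId (p : ℝ → R) (K : ℝ) : Prop :=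
  0 ≤ K ∧ (∀ l, S.IsProj (p l)) ∧
  (∀ l, l < -K → p l = 0) ∧ (∀ l, K ≤ l → p l = 1) ∧
  (∀ l l', l ≤ l' → S.le (p l) (p l')) ∧
  (∀ l, S.IsProjInf (p l) {x | ∃ l' > l, x = p l'})

end SynapticAlgebra

/-- `c` is a regular involution on the subset `T` of the poset `(T, le')`. -/
def IsRegInvPoset {R : Type*} (le' : R → R → Prop) (T : Set R) (c : R → R) : Prop :=
  (∀ a ∈ T, c a ∈ T) ∧ (∀ a ∈ T, c (c a) = a) ∧
  (∀ a ∈ T, ∀ b ∈ T, le' a b → le' (c b) (c a)) ∧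
  (∀ a ∈ T, ∀ b ∈ T, le' a (c a) → le' b (c b) → le' a (c b))

/-- `(T, le', c, 0, 1)` is a Kleene poset: a bounded poset with a regular involution. -/
def IsKleene {R : Type*} [Zero R] [One R] (le' : R → R → Prop) (T : Set R) (c : R → R) : Prop :=
  IsRegInvPoset le' T c ∧ (0 : R) ∈ T ∧ (1 : R) ∈ T ∧ ∀ a ∈ T, le' 0 a ∧ le' a 1

/-- Every pair of elements of `T` has an infimum and a supremum in `(T, le')`. -/
def HasBinSupInf {R : Type*} (le' : R → R → Prop) (T : Set R) : Prop :=
  ∀ a ∈ T, ∀ b ∈ T,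
    (∃ m ∈ T, le' m a ∧ le' m b ∧ ∀ x ∈ T, le' x a → le' x b → le' x m) ∧
    (∃ j ∈ T, le' a j ∧ le' b j ∧ ∀ x ∈ T, le' a x → le' b x → le' j x)

namespace SynapticAlgebra

variable {R : Type*} [Ring R] [Algebra ℝ R] (S : SynapticAlgebra R)

section Basic

variable {a b c : R}

lemma le_sub_iff (ha : a ∈ S.A) (hb : b ∈ S.A) : S.le a b ↔ S.le 0 (b - a) := by
  constructor
  · intro h
    have := S.add_le_add_right a ha b hb (-a) (S.A.neg_mem ha) h
    simpa [sub_eq_add_neg] using this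
  · intro h
    have := S.add_le_add_right 0 (S.A.zero_mem) (b - a) (S.A.sub_mem hb ha) a ha h
    simpa using this

lemma nonneg_add (ha : a ∈ S.A) (hb : b ∈ S.A) (h0a : S.le 0 a) (h0b : S.le 0 b) :
    S.le 0 (a + b) := by
  have h1 : S.le b (a + b) := by
    have := S.add_le_add_right 0 S.A.zero_mem a ha b hb h0a
    simpa [add_comm] using this
  exact S.le_trans 0 S.A.zero_mem b hb (a + b) (S.A.add_mem ha hb) h0b h1

lemma one_nonneg : S.le 0 (1 : R) := by
  have := S.sq_nn 1 S.one_mem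
  simpa using this

lemma sq_zero (ha : a ∈ S.A) (h : a * a = 0) : a = 0 := by
  have h1 : a * 1 * a = 0 := by simpa using h
  have := (S.quad_zero a ha 1 S.one_mem (S.one_nonneg) h1).1
  simpa using this

lemma jordan_mem (ha : a ∈ S.A) (hb : b ∈ S.A) : a * b + b * a ∈ S.A := by
  have h : a * b + b * a = (a + b) * (a + b) - a * a - b * b := by noncomm_ring
  rw [h]
  exact S.A.sub_mem (S.A.sub_mem (S.sq_mem _ (S.A.add_mem ha hb)) (S.sq_mem _ ha)) (S.sq_mem _ hb)

/-- If `a*b = 0` then `b*a = 0`. -/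
lemma mul_zero_symm (ha : a ∈ S.A) (hb : b ∈ S.A) (h : a * b = 0) : b * a = 0 := by
  have hmem : b * a ∈ S.A := by
    have := S.jordan_mem ha hb
    simpa [h] using this
  have hsq : (b * a) * (b * a) = 0 := by
    calc (b * a) * (b * a) = b * (a * b) * a := by noncomm_ring
    _ = 0 := by rw [h]; noncomm_ring
  exact S.sq_zero hmem hsq

end Basic

end SynapticAlgebra
namespace SynapticAlgebra

section Carr

variable {R : Type*} [Ring R] [Algebra ℝ R] (S : SynapticAlgebra R) {a b p q r s e f : R}

lemma mul_carr (ha : a ∈ S.A) : a * S.carr a = a := by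
  have hc := S.carr_mem a ha
  have h1 : S.carr a * (1 - S.carr a) = 0 := by
    have := S.carr_idem a ha
    noncomm_ring [this]
  have h2 : a * (1 - S.carr a) = 0 :=
    (S.carr_spec a ha (1 - S.carr a) (S.A.sub_mem S.one_mem hc)).2 h1
  have h3 : a - a * S.carr a = 0 := by rw [← h2]; noncomm_ring
  exact (sub_eq_zero.mp h3).symm

lemma carr_mul (ha : a ∈ S.A) : S.carr a * a = a := by
  have hc := S.carr_mem a ha
  have h2 : a * (1 - S.carr a) = 0 := by
    rw [mul_sub, mul_one, S.mul_carr ha, sub_self]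
  have h3 : (1 - S.carr a) * a = 0 :=
    S.mul_zero_symm ha (S.A.sub_mem S.one_mem hc) h2
  have h4 : a - S.carr a * a = 0 := by rw [← h3]; noncomm_ring
  exact (sub_eq_zero.mp h4).symm

lemma carr_isProj (ha : a ∈ S.A) : S.IsProj (S.carr a) :=
  ⟨S.carr_mem a ha, S.carr_idem a ha⟩

lemma isProj_one : S.IsProj (1 : R) := ⟨S.one_mem, by simp⟩

lemma isProj_zero : S.IsProj (0 : R) := ⟨S.A.zero_mem, by simp⟩

lemma isProj_compl (hp : S.IsProj p) : S.IsProj (1 - p) :=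
  ⟨S.A.sub_mem S.one_mem hp.1, by noncomm_ring [hp.2]⟩

lemma proj_nonneg (hp : S.IsProj p) : S.le 0 p := by
  have := S.sq_nn p hp.1
  rwa [hp.2] at this

lemma proj_le_one (hp : S.IsProj p) : S.le p 1 := by
  rw [S.le_sub_iff hp.1 S.one_mem]
  exact S.proj_nonneg (S.isProj_compl hp)

/-- If `r*s = r` and `s*r = r` for projections then `r ≤ s`. -/
lemma proj_le_of_mul (hr : S.IsProj r) (hs : S.IsProj s) (h1 : r * s = r) (h2 : s * r = r) :
    S.le r s := by
  have hmem : (1 - r) ∈ S.A := S.A.sub_mem S.one_mem hr.1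
  have hq : S.le 0 ((1 - r) * s * (1 - r)) :=
    S.quad_nn _ hmem _ hs.1 (S.proj_nonneg (S.isProj_compl hr)) (S.proj_nonneg hs)
  have he : (1 - r) * s * (1 - r) = s - r := by
    have expand : (1 - r) * s * (1 - r) = s - r * s - s * r + r * s * r := by noncomm_ring
    rw [expand, h1, h2, hr.2]
    abel
  rw [he] at hq
  rw [S.le_sub_iff hr.1 hs.1]
  exact hq

/-- If `r ≤ s` for projections then `r*s = r` and `s*r = r`. -/
lemma proj_mul_of_le (hr : S.IsProj r) (hs : S.IsProj s) (h : S.le r s) :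
    r * s = r ∧ s * r = r := by
  have hms : (1 - s) ∈ S.A := S.A.sub_mem S.one_mem hs.1
  have hsr : S.le 0 (s - r) := (S.le_sub_iff hr.1 hs.1).1 h
  have h1 : S.le 0 ((1 - s) * (s - r) * (1 - s)) :=
    S.quad_nn _ hms _ (S.A.sub_mem hs.1 hr.1) (S.proj_nonneg (S.isProj_compl hs)) hsr
  have h2 : S.le 0 ((1 - s) * r * (1 - s)) :=
    S.quad_nn _ hms _ hr.1 (S.proj_nonneg (S.isProj_compl hs)) (S.proj_nonneg hr)
  have key : (1 - s) * (s - r) * (1 - s) = -((1 - s) * r * (1 - s)) := by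
    have expand : (1 - s) * (s - r) * (1 - s)
        = (s - s * s) - (s - s * s) * s - (1 - s) * r * (1 - s) := by noncomm_ring
    rw [expand, hs.2]
    simp
  rw [key] at h1
  have hmem : (1 - s) * r * (1 - s) ∈ S.A := S.quad_mem _ hms _ hr.1
  have hle0 : S.le ((1 - s) * r * (1 - s)) 0 := by
    have := (S.le_sub_iff hmem S.A.zero_mem).2
    apply this
    simpa [sub_eq_add_neg] using h1
  have hz : (1 - s) * r * (1 - s) = 0 :=
    S.le_antisymm _ hmem _ S.A.zero_mem hle0 (by simpa using h2)
  obtain ⟨hz1, hz2⟩ := S.quad_zero _ hms _ hr.1 (S.proj_nonneg hr) hz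
  constructor
  · linear_combination (norm := noncomm_ring) -hz2
  · linear_combination (norm := noncomm_ring) -hz1

lemma carr_zero : S.carr (0 : R) = 0 := by
  have h := (S.carr_spec 0 S.A.zero_mem 1 S.one_mem).1 (by simp)
  simpa using h

/-- Monotonicity of the carrier on nonnegative elements. -/
lemma carr_mono (he : e ∈ S.A) (hf : f ∈ S.A) (h0e : S.le 0 e) (hef : S.le e f) :
    S.le (S.carr e) (S.carr f) := by
  set p := S.carr f with hpdef
  have hpP : S.IsProj p := S.carr_isProj hf
  have hp1 : (1 - p) ∈ S.A := S.A.sub_mem S.one_mem hpP.1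
  have hp1nn : S.le 0 (1 - p) := S.proj_nonneg (S.isProj_compl hpP)
  -- (1-p) f (1-p) = 0
  have hf1 : f * (1 - p) = 0 := by
    rw [mul_sub, mul_one, hpdef, S.mul_carr hf, sub_self]
  have hff : (1 - p) * f * (1 - p) = 0 := by rw [mul_assoc, hf1, mul_zero]
  -- (1-p) e (1-p) between 0 and (1-p) f (1-p) = 0
  have hq1 : S.le 0 ((1 - p) * e * (1 - p)) := S.quad_nn _ hp1 _ he hp1nn h0e
  have hq2 : S.le 0 ((1 - p) * (f - e) * (1 - p)) :=
    S.quad_nn _ hp1 _ (S.A.sub_mem hf he) hp1nn ((S.le_sub_iff he hf).1 hef)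
  have hqe : (1 - p) * (f - e) * (1 - p) = -((1 - p) * e * (1 - p)) := by
    have expand : (1 - p) * (f - e) * (1 - p)
        = (1 - p) * f * (1 - p) - (1 - p) * e * (1 - p) := by noncomm_ring
    rw [expand, hff]
    simp
  rw [hqe] at hq2
  have hmem : (1 - p) * e * (1 - p) ∈ S.A := S.quad_mem _ hp1 _ he
  have hle0 : S.le ((1 - p) * e * (1 - p)) 0 := by
    apply (S.le_sub_iff hmem S.A.zero_mem).2
    simpa [sub_eq_add_neg] using hq2
  have hz : (1 - p) * e * (1 - p) = 0 :=
    S.le_antisymm _ hmem _ S.A.zero_mem hle0 (by simpa using hq1)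
  obtain ⟨_, hz2⟩ := S.quad_zero _ hp1 _ he h0e hz
  -- e * (1-p) = 0 hence carr e * (1-p) = 0
  have hcz : S.carr e * (1 - p) = 0 := (S.carr_spec e he _ hp1).1 hz2
  have hcz' : (1 - p) * S.carr e = 0 := S.mul_zero_symm (S.carr_mem e he) hp1 hcz
  have hce : S.IsProj (S.carr e) := S.carr_isProj he
  apply S.proj_le_of_mul hce hpP
  · have h5 : S.carr e - S.carr e * p = 0 := by rw [← hcz]; noncomm_ring
    exact (sub_eq_zero.mp h5).symm
  · have h6 : S.carr e - p * S.carr e = 0 := by rw [← hcz']; noncomm_ring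
    exact (sub_eq_zero.mp h6).symm

end Carr

end SynapticAlgebra
namespace SynapticAlgebra

section Abs

variable {R : Type*} [Ring R] [Algebra ℝ R] (S : SynapticAlgebra R) {a s v : R}

lemma absval_mem (ha : a ∈ S.A) : S.absval a ∈ S.A :=
  S.sqrt_mem _ (S.sq_mem a ha) (S.sq_nn a ha)

lemma absval_nonneg (ha : a ∈ S.A) : S.le 0 (S.absval a) :=
  S.sqrt_nn _ (S.sq_mem a ha) (S.sq_nn a ha)

lemma absval_sq (ha : a ∈ S.A) : S.absval a * S.absval a = a * a :=
  S.sqrt_sq _ (S.sq_mem a ha) (S.sq_nn a ha)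

lemma absval_comm (ha : a ∈ S.A) : S.absval a * a = a * S.absval a :=
  S.sqrt_bicomm _ (S.sq_mem a ha) (S.sq_nn a ha) a ha (by noncomm_ring)

lemma absval_neg : S.absval (-a) = S.absval a := by
  unfold absval
  rw [neg_mul_neg]

lemma neg_nonpos (ha : a ∈ S.A) (h : S.le 0 (-a)) : S.le a 0 := by
  rw [S.le_sub_iff ha S.A.zero_mem, zero_sub]
  exact h

lemma sum_zero_of_nonneg (ha : a ∈ S.A) (hs : s ∈ S.A) (h0a : S.le 0 a) (h0s : S.le 0 s)
    (h : a + s = 0) : a = 0 ∧ s = 0 := by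
  have hneg : -a = s := neg_eq_of_add_eq_zero_left (by rwa [add_comm] at h)
  have h1 : S.le a 0 := S.neg_nonpos ha (by rw [hneg]; exact h0s)
  have ha0 : a = 0 := S.le_antisymm a ha 0 S.A.zero_mem h1 h0a
  refine ⟨ha0, ?_⟩
  rw [← hneg, ha0, neg_zero]

/-- Jordan: `0 ≤ |a| − a`. -/
lemma jordan_sub (ha : a ∈ S.A) : S.le 0 (S.absval a - a) := by
  have hsq : a * a ∈ S.A := S.sq_mem a ha
  set j := S.absval a with hj
  have hjmem : j ∈ S.A := S.absval_mem ha
  have hjnn : S.le 0 j := S.absval_nonneg ha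
  have hjsq : j * j = a * a := S.absval_sq ha
  have hjc : j * a = a * j := S.absval_comm ha
  set u := j - a with hu
  set v := j + a with hv
  have humem : u ∈ S.A := S.A.sub_mem hjmem ha
  have hvmem : v ∈ S.A := S.A.add_mem hjmem ha
  have huv : u * v = 0 := by
    have e : u * v = j * j - a * a + (j * a - a * j) := by rw [hu, hv]; noncomm_ring
    rw [e, hjsq, hjc]
    abel
  set p := S.carr u with hp
  have hpmem : p ∈ S.A := S.carr_mem u humem
  have hpv : p * v = 0 := (S.carr_spec u humem v hvmem).1 huv
  have hup : u * p = u := S.mul_carr humem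
  have hpu : p * u = u := S.carr_mul humem
  have hkey : p * (u + v) * p = u := by
    rw [mul_add, hpu, hpv, add_zero, hup]
  have huvnn : S.le 0 (u + v) := by
    have e : u + v = j + j := by rw [hu, hv]; abel
    rw [e]
    exact S.nonneg_add hjmem hjmem hjnn hjnn
  have := S.quad_nn _ hpmem _ (S.A.add_mem humem hvmem)
    (S.proj_nonneg (S.carr_isProj humem)) huvnn
  rwa [hkey] at this

/-- Jordan: `0 ≤ |a| + a`. -/
lemma jordan_add (ha : a ∈ S.A) : S.le 0 (S.absval a + a) := by
  have := S.jordan_sub (S.A.neg_mem ha)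
  rw [absval_neg, sub_neg_eq_add] at this
  exact this

lemma pospart_mem (ha : a ∈ S.A) : S.pospart a ∈ S.A :=
  S.A.smul_mem _ (S.A.add_mem (S.absval_mem ha) ha)

lemma pospart_nonneg (ha : a ∈ S.A) : S.le 0 (S.pospart a) :=
  S.smul_nonneg _ (by norm_num) _ (S.A.add_mem (S.absval_mem ha) ha) (S.jordan_add ha)

/-- Comparison: if `s, v ≥ 0` commute and `s² ≤ v²` then `s ≤ v`. -/
lemma le_of_sq_le (hs : s ∈ S.A) (hv : v ∈ S.A) (h0s : S.le 0 s) (h0v : S.le 0 v)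
    (hsv : s * v = v * s) (hsq : S.le (s * s) (v * v)) : S.le s v := by
  set w := v - s with hw
  set m := v + s with hm
  have hwmem : w ∈ S.A := S.A.sub_mem hv hs
  have hmmem : m ∈ S.A := S.A.add_mem hv hs
  have hmnn : S.le 0 m := S.nonneg_add hv hs h0v h0s
  have hwm : w * m = v * v - s * s := by
    have e : w * m = v * v + (v * s - s * v) - s * s := by rw [hw, hm]; noncomm_ring
    rw [e, hsv]; abel
  have hmw : m * w = v * v - s * s := by
    have e : m * w = v * v + (s * v - v * s) - s * s := by rw [hw, hm]; noncomm_ring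
    rw [e, hsv]; abel
  have hwmc : w * m = m * w := hwm.trans hmw.symm
  have hwmmem : w * m ∈ S.A := by
    rw [hwm]; exact S.A.sub_mem (S.sq_mem v hv) (S.sq_mem s hs)
  have hwmnn : S.le 0 (w * m) := by
    rw [hwm]
    exact (S.le_sub_iff (S.sq_mem s hs) (S.sq_mem v hv)).1 hsq
  set jw := S.absval w with hjw
  have hjwmem : jw ∈ S.A := S.absval_mem hwmem
  have hjwsq : jw * jw = w * w := S.absval_sq hwmem
  have hjwc : jw * w = w * jw := S.absval_comm hwmem
  set z := jw - w with hz
  have hzmem : z ∈ S.A := S.A.sub_mem hjwmem hwmem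
  have hznn : S.le 0 z := S.jordan_sub hwmem
  have hww_m : (w * w) * m = m * (w * w) := by
    rw [mul_assoc, hwmc, ← mul_assoc, hwmc, mul_assoc]
  have hjwm : jw * m = m * jw :=
    S.sqrt_bicomm _ (S.sq_mem w hwmem) (S.sq_nn w hwmem) m hmmem hww_m
  have hzm : z * m = m * z := by
    rw [hz, sub_mul, mul_sub, hjwm, hwmc]
  have hzz : z * z = -(z * w) - z * w := by
    have e1 : z * z = jw * jw - jw * w - w * jw + w * w := by rw [hz]; noncomm_ring
    have e2 : z * w = jw * w - w * w := by rw [hz]; noncomm_ring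
    rw [e1, e2, hjwsq, ← hjwc]
    abel
  have hq1 : S.le 0 (z * (w * m) * z) := S.quad_nn _ hzmem _ hwmmem hznn hwmnn
  have hassoc : z * (w * m) * z = ((z * w) * z) * m := by
    calc z * (w * m) * z = (z * w) * (m * z) := by noncomm_ring
    _ = (z * w) * (z * m) := by rw [hzm]
    _ = ((z * w) * z) * m := by noncomm_ring
  have h2smul : (2 : ℝ) • (z * (w * m) * z) = -((z * z * z) * m) := by
    rw [hassoc]
    have e : (2 : ℝ) • (((z * w) * z) * m) = (((2 : ℝ) • (z * w)) * z) * m := by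
      rw [smul_mul_assoc, smul_mul_assoc]
    rw [e]
    have e2 : (2 : ℝ) • (z * w) = -(z * z) := by
      rw [two_smul, hzz]; abel
    rw [e2]
    noncomm_ring
  have hz3mem : z * z * z ∈ S.A := S.quad_mem z hzmem z hzmem
  have hz3nn : S.le 0 (z * z * z) := S.quad_nn z hzmem z hzmem hznn hznn
  have hz3m : (z * z * z) * m = m * (z * z * z) := by
    calc (z*z*z)*m = (z*z)*(z*m) := by noncomm_ring
    _ = (z*z)*(m*z) := by rw [hzm]
    _ = z*(z*m)*z := by noncomm_ring
    _ = z*(m*z)*z := by rw [hzm]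
    _ = (z*m)*(z*z) := by noncomm_ring
    _ = (m*z)*(z*z) := by rw [hzm]
    _ = m*(z*z*z) := by noncomm_ring
  set y := S.sqrt (z * z * z) with hy
  have hymem : y ∈ S.A := S.sqrt_mem _ hz3mem hz3nn
  have hynn : S.le 0 y := S.sqrt_nn _ hz3mem hz3nn
  have hysq : y * y = z * z * z := S.sqrt_sq _ hz3mem hz3nn
  have hym : y * m = m * y := S.sqrt_bicomm _ hz3mem hz3nn m hmmem hz3m
  have hz3m_eq : (z * z * z) * m = y * m * y := by
    calc (z*z*z)*m = (y*y)*m := by rw [hysq]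
    _ = y*(y*m) := by rw [mul_assoc]
    _ = y*(m*y) := by rw [hym]
    _ = y*m*y := by rw [mul_assoc]
  have hz3mnn : S.le 0 ((z * z * z) * m) := by
    rw [hz3m_eq]
    exact S.quad_nn y hymem m hmmem hynn hmnn
  have hz3mmem : (z * z * z) * m ∈ S.A := by rw [hz3m_eq]; exact S.quad_mem y hymem m hmmem
  have hz3mle : S.le ((z * z * z) * m) 0 := by
    apply S.neg_nonpos hz3mmem
    rw [← h2smul]
    exact S.smul_nonneg 2 (by norm_num) _ (S.quad_mem z hzmem _ hwmmem) hq1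
  have hz3mzero : (z * z * z) * m = 0 :=
    S.le_antisymm _ hz3mmem _ S.A.zero_mem hz3mle hz3mnn
  have hqz : z * (w * m) * z = 0 := by
    have h20 : (2 : ℝ) • (z * (w * m) * z) = 0 := by rw [h2smul, hz3mzero, neg_zero]
    rcases smul_eq_zero.mp h20 with h | h
    · norm_num at h
    · exact h
  have hzwm : z * (w * m) = 0 := (S.quad_zero z hzmem _ hwmmem hwmnn hqz).1
  have hzwm0 : (z * w) * m = 0 := by rw [mul_assoc]; exact hzwm
  have hzzm : (z * z) * m = 0 := by
    rw [hzz, sub_mul, neg_mul, hzwm0]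
    simp
  have hzmz : z * m * z = 0 := by
    rw [mul_assoc, ← hzm, ← mul_assoc]
    exact hzzm
  have hsplit : z * m * z = z * v * z + z * s * z := by rw [hm]; noncomm_ring
  obtain ⟨hv0, hs0⟩ := S.sum_zero_of_nonneg (S.quad_mem z hzmem v hv) (S.quad_mem z hzmem s hs)
    (S.quad_nn z hzmem v hv hznn h0v) (S.quad_nn z hzmem s hs hznn h0s)
    (by rw [← hsplit]; exact hzmz)
  have hzv : z * v = 0 := (S.quad_zero z hzmem v hv h0v hv0).1
  have hzs : z * s = 0 := (S.quad_zero z hzmem s hs h0s hs0).1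
  have hzw0 : z * w = 0 := by rw [hw, mul_sub, hzv, hzs, sub_zero]
  have hzz0 : z * z = 0 := by rw [hzz, hzw0]; simp
  have hz0 : z = 0 := S.sq_zero hzmem hzz0
  have hjweq : jw - w = 0 := by rw [← hz]; exact hz0
  have hwnn : S.le 0 w := by
    have := S.absval_nonneg hwmem
    rwa [← hjw, sub_eq_zero.mp hjweq] at this
  exact (S.le_sub_iff hs hv).2 (by rw [← hw]; exact hwnn)

end Abs

end SynapticAlgebra
namespace SynapticAlgebra

section Scalar

variable {R : Type*} [Ring R] [Algebra ℝ R] (S : SynapticAlgebra R) {x y r p q : R}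

lemma smul_one_mem (t : ℝ) : t • (1 : R) ∈ S.A := S.A.smul_mem t S.one_mem

lemma algebraMap_mem (t : ℝ) : algebraMap ℝ R t ∈ S.A := by
  rw [Algebra.algebraMap_eq_smul_one]
  exact S.smul_one_mem t

lemma smul_one_nonneg {t : ℝ} (ht : 0 ≤ t) : S.le 0 (t • (1 : R)) :=
  S.smul_nonneg t ht 1 S.one_mem S.one_nonneg

/-- commuting helper -/
lemma comm_assoc_help {a b c : R} (hab : a * b = b * a) (hac : a * c = c * a) :
    a * (b * c) = (b * c) * a := by
  rw [← mul_assoc, hab, mul_assoc, hac, ← mul_assoc]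

lemma smul_one_comm (t : ℝ) (x : R) : x * (t • (1 : R)) = (t • (1 : R)) * x := by
  rw [mul_smul_comm, smul_mul_assoc, mul_one, one_mul]

/-- `|x + t·1| ≤ |x| + |t|·1`. -/
lemma absval_add_smul_le (hx : x ∈ S.A) (t : ℝ) :
    S.le (S.absval (x + t • (1 : R))) (S.absval x + |t| • (1 : R)) := by
  set xt := x + t • (1 : R) with hxt
  have hxtmem : xt ∈ S.A := S.A.add_mem hx (S.smul_one_mem t)
  set s := S.absval xt with hs
  set jx := S.absval x with hjx
  set v := jx + |t| • (1 : R) with hv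
  have hjxmem : jx ∈ S.A := S.absval_mem hx
  have hsmem : s ∈ S.A := S.absval_mem hxtmem
  have hvmem : v ∈ S.A := S.A.add_mem hjxmem (S.smul_one_mem |t|)
  have h0s : S.le 0 s := S.absval_nonneg hxtmem
  have h0v : S.le 0 v :=
    S.nonneg_add hjxmem (S.smul_one_mem |t|) (S.absval_nonneg hx) (S.smul_one_nonneg (abs_nonneg t))
  -- commutation of s and v
  have hxxt : x * xt = xt * x := by
    rw [hxt, mul_add, add_mul, smul_one_comm]
  have hxt2x : x * (xt * xt) = (xt * xt) * x := comm_assoc_help hxxt hxxt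
  have hsx : s * x = x * s :=
    S.sqrt_bicomm _ (S.sq_mem xt hxtmem) (S.sq_nn xt hxtmem) x hx hxt2x.symm
  have hsxx : s * (x * x) = (x * x) * s := comm_assoc_help hsx hsx
  have hsjx : jx * s = s * jx :=
    S.sqrt_bicomm _ (S.sq_mem x hx) (S.sq_nn x hx) s hsmem hsxx.symm
  have hsv : s * v = v * s := by
    rw [hv, mul_add, add_mul, ← hsjx, smul_one_comm]
  -- squares
  have hssq : s * s = x * x + ((t • x + t • x) + (t * t) • (1:R)) := by
    rw [hs, S.absval_sq hxtmem, hxt]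
    simp only [mul_add, add_mul, smul_mul_assoc, mul_smul_comm, one_mul, mul_one, smul_smul]
    module
  have hjxsq : jx * jx = x * x := S.absval_sq hx
  have hvsq : v * v = x * x + ((|t| • jx + |t| • jx) + (t * t) • (1:R)) := by
    rw [hv]
    simp only [mul_add, add_mul, smul_mul_assoc, mul_smul_comm, smul_add, one_mul, mul_one,
      smul_smul]
    simp only [hjxsq, abs_mul_abs_self]
    module
  have haux : S.le 0 (|t| • jx - t • x) := by
    rcases le_or_gt 0 t with ht | ht
    · have e : |t| • jx - t • x = t • (jx - x) := by rw [abs_of_nonneg ht]; module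
      rw [e]
      exact S.smul_nonneg t ht _ (S.A.sub_mem hjxmem hx) (S.jordan_sub hx)
    · have e : |t| • jx - t • x = (-t) • (jx + x) := by rw [abs_of_neg ht]; module
      rw [e]
      exact S.smul_nonneg (-t) (by linarith) _ (S.A.add_mem hjxmem hx) (S.jordan_add hx)
  have hsqle : S.le (s * s) (v * v) := by
    rw [S.le_sub_iff (S.sq_mem s hsmem) (S.sq_mem v hvmem)]
    have e : v * v - s * s = (|t| • jx - t • x) + (|t| • jx - t • x) := by
      rw [hssq, hvsq]; module
    rw [e]
    exact S.nonneg_add (S.A.sub_mem (S.A.smul_mem _ hjxmem) (S.A.smul_mem _ hx))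
      (S.A.sub_mem (S.A.smul_mem _ hjxmem) (S.A.smul_mem _ hx)) haux haux
  exact S.le_of_sq_le hsmem hvmem h0s h0v hsv hsqle

lemma pospart_sub_self (hy : y ∈ S.A) :
    S.pospart y - y = (2⁻¹ : ℝ) • (S.absval y - y) := by
  rw [pospart]; module

lemma le_pospart (hy : y ∈ S.A) : S.le y (S.pospart y) := by
  rw [S.le_sub_iff hy (S.pospart_mem hy), pospart_sub_self S hy]
  exact S.smul_nonneg _ (by norm_num) _ (S.A.sub_mem (S.absval_mem hy) hy) (S.jordan_sub hy)

end Scalar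

end SynapticAlgebra
namespace SynapticAlgebra

section Scalar2

variable {R : Type*} [Ring R] [Algebra ℝ R] (S : SynapticAlgebra R) {x y : R}

lemma pospart_smul_shift_le (hy : y ∈ S.A) {t : ℝ} (ht : 0 ≤ t) :
    S.le (S.pospart (y - t • (1 : R))) (S.pospart y) := by
  have hytmem : y - t • (1:R) ∈ S.A := S.A.sub_mem hy (S.smul_one_mem t)
  have habs := S.absval_add_smul_le hy (-t)
  rw [abs_neg, abs_of_nonneg ht] at habs
  have e0 : y + (-t) • (1:R) = y - t • (1:R) := by module
  rw [e0] at habs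
  -- habs : |y - t·1| ≤ |y| + t·1
  rw [S.le_sub_iff (S.pospart_mem hytmem) (S.pospart_mem hy)]
  have e1 : S.pospart y - S.pospart (y - t • (1:R))
      = (2⁻¹ : ℝ) • ((S.absval y + t • (1:R)) - S.absval (y - t • (1:R))) := by
    simp only [pospart]; module
  rw [e1]
  exact S.smul_nonneg _ (by norm_num) _
    (S.A.sub_mem (S.A.add_mem (S.absval_mem hy) (S.smul_one_mem t)) (S.absval_mem hytmem))
    ((S.le_sub_iff (S.absval_mem hytmem)
      (S.A.add_mem (S.absval_mem hy) (S.smul_one_mem t))).1 habs)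

lemma pospart_smul_shift_ge (hy : y ∈ S.A) {t : ℝ} (ht : 0 ≤ t) :
    S.le (S.pospart y - S.pospart (y - t • (1 : R))) (t • (1 : R)) := by
  have hytmem : y - t • (1:R) ∈ S.A := S.A.sub_mem hy (S.smul_one_mem t)
  have habs := S.absval_add_smul_le hytmem t
  have e0 : (y - t • (1:R)) + t • (1:R) = y := by abel
  rw [e0, abs_of_nonneg ht] at habs
  -- habs : |y| ≤ |y - t·1| + t·1
  have hmem : S.pospart y - S.pospart (y - t • (1:R)) ∈ S.A :=
    S.A.sub_mem (S.pospart_mem hy) (S.pospart_mem hytmem)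
  rw [S.le_sub_iff hmem (S.smul_one_mem t)]
  have e1 : t • (1:R) - (S.pospart y - S.pospart (y - t • (1:R)))
      = (2⁻¹ : ℝ) • ((S.absval (y - t • (1:R)) + t • (1:R)) - S.absval y) := by
    simp only [pospart]; module
  rw [e1]
  exact S.smul_nonneg _ (by norm_num) _
    (S.A.sub_mem (S.A.add_mem (S.absval_mem hytmem) (S.smul_one_mem t)) (S.absval_mem hy))
    ((S.le_sub_iff (S.absval_mem hy)
      (S.A.add_mem (S.absval_mem hytmem) (S.smul_one_mem t))).1 habs)

lemma absval_of_nonneg (hy : y ∈ S.A) (h0 : S.le 0 y) : S.absval y = y := by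
  have hjmem := S.absval_mem hy
  have hjnn := S.absval_nonneg hy
  have hsq : S.le (S.absval y * S.absval y) (y * y) := by
    rw [S.absval_sq hy]
    exact S.le_refl _ (S.sq_mem y hy)
  have hsq' : S.le (y * y) (S.absval y * S.absval y) := by
    rw [S.absval_sq hy]
    exact S.le_refl _ (S.sq_mem y hy)
  have h1 : S.le (S.absval y) y :=
    S.le_of_sq_le hjmem hy hjnn h0 (S.absval_comm hy) hsq
  have h2 : S.le y (S.absval y) :=
    S.le_of_sq_le hy hjmem h0 hjnn (S.absval_comm hy).symm hsq'
  exact S.le_antisymm _ hjmem _ hy h1 h2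

lemma pospart_of_nonneg (hy : y ∈ S.A) (h0 : S.le 0 y) : S.pospart y = y := by
  simp only [pospart, S.absval_of_nonneg hy h0]
  module

lemma absval_of_nonpos (hy : y ∈ S.A) (h0 : S.le y 0) : S.absval y = -y := by
  have h0' : S.le 0 (-y) := by
    have := (S.le_sub_iff hy S.A.zero_mem).1 h0
    rwa [zero_sub] at this
  calc S.absval y = S.absval (-y) := (S.absval_neg).symm
  _ = -y := S.absval_of_nonneg (S.A.neg_mem hy) h0'

lemma pospart_of_nonpos (hy : y ∈ S.A) (h0 : S.le y 0) : S.pospart y = 0 := by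
  simp only [pospart, S.absval_of_nonpos hy h0]
  module

lemma pospart_mul_negpart (hy : y ∈ S.A) : S.pospart y * (S.pospart y - y) = 0 := by
  rw [S.pospart_sub_self hy]
  simp only [pospart]
  rw [smul_mul_assoc, mul_smul_comm, smul_smul]
  have e : (S.absval y + y) * (S.absval y - y)
      = S.absval y * S.absval y - y * y + (y * S.absval y - S.absval y * y) := by noncomm_ring
  rw [e, S.absval_sq hy, ← S.absval_comm hy]
  simp

end Scalar2

end SynapticAlgebra
namespace SynapticAlgebra

section Spec

variable {R : Type*} [Ring R] [Algebra ℝ R] (S : SynapticAlgebra R) {x r p q : R}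

lemma shift_mem (hx : x ∈ S.A) (l : ℝ) : x - algebraMap ℝ R l ∈ S.A :=
  S.A.sub_mem hx (S.algebraMap_mem l)

lemma specProj_isProj (hx : x ∈ S.A) (l : ℝ) : S.IsProj (S.specProj x l) :=
  S.isProj_compl (S.carr_isProj (S.pospart_mem (S.shift_mem hx l)))

lemma specProj_mem (hx : x ∈ S.A) (l : ℝ) : S.specProj x l ∈ S.A :=
  (S.specProj_isProj hx l).1

lemma specProj_mono (hx : x ∈ S.A) {l μ : ℝ} (h : l ≤ μ) :
    S.le (S.specProj x l) (S.specProj x μ) := by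
  have hlmem := S.shift_mem hx l
  have hmmem := S.shift_mem hx μ
  have heshift : x - algebraMap ℝ R μ = (x - algebraMap ℝ R l) - (μ - l) • (1:R) := by
    simp only [Algebra.algebraMap_eq_smul_one]
    module
  have hef : S.le (S.pospart (x - algebraMap ℝ R μ)) (S.pospart (x - algebraMap ℝ R l)) := by
    rw [heshift]
    exact S.pospart_smul_shift_le hlmem (by linarith)
  have hcar := S.carr_mono (S.pospart_mem hmmem) (S.pospart_mem hlmem)
    (S.pospart_nonneg hmmem) hef
  simp only [specProj]
  rw [S.le_sub_iff (S.A.sub_mem S.one_mem (S.carr_mem _ (S.pospart_mem hlmem)))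
      (S.A.sub_mem S.one_mem (S.carr_mem _ (S.pospart_mem hmmem)))]
  have e1 : (1 - S.carr (S.pospart (x - algebraMap ℝ R μ)))
      - (1 - S.carr (S.pospart (x - algebraMap ℝ R l)))
      = S.carr (S.pospart (x - algebraMap ℝ R l))
        - S.carr (S.pospart (x - algebraMap ℝ R μ)) := by abel
  rw [e1]
  exact (S.le_sub_iff (S.carr_mem _ (S.pospart_mem hmmem))
    (S.carr_mem _ (S.pospart_mem hlmem))).1 hcar

lemma le_zero_of_all_eps (hx : x ∈ S.A) (h : ∀ ε : ℝ, 0 < ε → S.le x (ε • (1:R))) :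
    S.le x 0 := by
  apply S.arch x hx 1 S.one_mem
  intro n
  have hε : (0:ℝ) < 1/((n:ℝ)+1) := by positivity
  have h1 := h _ hε
  have h2 : S.le ((n:ℝ) • x) (((n:ℝ)/((n:ℝ)+1)) • (1:R)) := by
    rw [S.le_sub_iff (S.A.smul_mem _ hx) (S.smul_one_mem _)]
    have e : ((n:ℝ)/((n:ℝ)+1)) • (1:R) - (n:ℝ) • x
        = (n:ℝ) • ((1/((n:ℝ)+1)) • (1:R) - x) := by
      module
    rw [e]
    exact S.smul_nonneg _ (Nat.cast_nonneg n) _ (S.A.sub_mem (S.smul_one_mem _) hx)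
      ((S.le_sub_iff hx (S.smul_one_mem _)).1 h1)
  have h3 : S.le (((n:ℝ)/((n:ℝ)+1)) • (1:R)) 1 := by
    rw [S.le_sub_iff (S.smul_one_mem _) S.one_mem]
    have e : (1:R) - ((n:ℝ)/((n:ℝ)+1)) • (1:R) = (1 - (n:ℝ)/((n:ℝ)+1)) • (1:R) := by
      rw [sub_smul, one_smul]
    rw [e]
    have hd : (n:ℝ)/((n:ℝ)+1) ≤ 1 := by
      apply div_le_one_of_le₀ <;> [linarith; positivity]
    exact S.smul_one_nonneg (by linarith)
  exact S.le_trans _ (S.A.smul_mem _ hx) _ (S.smul_one_mem _) _ S.one_mem h2 h3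

lemma carr_proj (hp : S.IsProj p) : S.carr p = p := by
  have hmem1 : (1:R) - p ∈ S.A := S.A.sub_mem S.one_mem hp.1
  have h1 : p * (1 - p) = 0 := by rw [mul_sub, mul_one, hp.2, sub_self]
  have h2 : S.carr p * (1 - p) = 0 := (S.carr_spec p hp.1 _ hmem1).1 h1
  have h3 : (1 - p) * S.carr p = 0 := S.mul_zero_symm (S.carr_mem p hp.1) hmem1 h2
  have h4 : S.carr p - p * S.carr p = 0 := by rw [← h3]; noncomm_ring
  calc S.carr p = p * S.carr p := sub_eq_zero.mp h4
  _ = p := S.mul_carr hp.1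

/-- `carr (p + q)` is the join of the projections `p`, `q`. -/
lemma sup_proj (hp : S.IsProj p) (hq : S.IsProj q) :
    S.IsProjSup (S.carr (p + q)) {p, q} := by
  have hpq : p + q ∈ S.A := S.A.add_mem hp.1 hq.1
  have hpqnn : S.le 0 (p + q) := S.nonneg_add hp.1 hq.1 (S.proj_nonneg hp) (S.proj_nonneg hq)
  have hcP := S.carr_isProj hpq
  refine ⟨hcP, ?_, ?_⟩
  · have hmain : ∀ u v : R, S.IsProj u → S.IsProj v → S.le u (S.carr (u + v)) := by
      intro u v hu hv
      have h1 : S.le u (u + v) := by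
        rw [S.le_sub_iff hu.1 (S.A.add_mem hu.1 hv.1)]
        have e : u + v - u = v := by abel
        rw [e]
        exact S.proj_nonneg hv
      have := S.carr_mono hu.1 (S.A.add_mem hu.1 hv.1) (S.proj_nonneg hu) h1
      rwa [S.carr_proj hu] at this
    intro t ht
    simp only [Set.mem_insert_iff, Set.mem_singleton_iff] at ht
    rcases ht with rfl | rfl
    · exact hmain t q hp hq
    · rw [add_comm]
      exact hmain t p hq hp
  · intro r hr hub
    have hmem1 : (1:R) - r ∈ S.A := S.A.sub_mem S.one_mem hr.1
    have hpr := S.proj_mul_of_le hp hr (hub p (by simp))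
    have hqr := S.proj_mul_of_le hq hr (hub q (by simp))
    have h1 : (p + q) * (1 - r) = 0 := by
      rw [add_mul, mul_sub, mul_sub, mul_one, mul_one, hpr.1, hqr.1]
      simp
    have h2 : S.carr (p + q) * (1 - r) = 0 := (S.carr_spec _ hpq _ hmem1).1 h1
    have h3 : (1 - r) * S.carr (p + q) = 0 := S.mul_zero_symm (S.carr_mem _ hpq) hmem1 h2
    apply S.proj_le_of_mul hcP hr
    · have e : S.carr (p + q) - S.carr (p + q) * r = 0 := by rw [← h2]; noncomm_ring
      exact (sub_eq_zero.mp e).symm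
    · have e : S.carr (p + q) - r * S.carr (p + q) = 0 := by rw [← h3]; noncomm_ring
      exact (sub_eq_zero.mp e).symm

/-- Right continuity of the spectral resolution. -/
lemma specProj_right_cont (hx : x ∈ S.A) {l : ℝ} (hr : S.IsProj r)
    (h : ∀ μ, l < μ → S.le r (S.specProj x μ)) : S.le r (S.specProj x l) := by
  have hlmem := S.shift_mem hx l
  have hfmem := S.pospart_mem hlmem
  have hfnn := S.pospart_nonneg hlmem
  have hkey : ∀ μ, l < μ → S.pospart (x - algebraMap ℝ R μ) * r = 0 := by
    intro μ hμ
    have hp := S.specProj_isProj hx μ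
    obtain ⟨_, h2⟩ := S.proj_mul_of_le hr hp (h μ hμ)
    simp only [specProj] at h2
    have h3 : S.carr (S.pospart (x - algebraMap ℝ R μ)) * r = 0 := by
      have e : (1 - S.carr (S.pospart (x - algebraMap ℝ R μ))) * r
          = r - S.carr (S.pospart (x - algebraMap ℝ R μ)) * r := by noncomm_ring
      rw [e] at h2
      exact sub_eq_self.mp h2
    exact (S.carr_spec _ (S.pospart_mem (S.shift_mem hx μ)) r hr.1).2 h3
  have hqmem : r * S.pospart (x - algebraMap ℝ R l) * r ∈ S.A := S.quad_mem r hr.1 _ hfmem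
  have hqnn : S.le 0 (r * S.pospart (x - algebraMap ℝ R l) * r) :=
    S.quad_nn r hr.1 _ hfmem (S.proj_nonneg hr) hfnn
  have hbound : ∀ ε : ℝ, 0 < ε →
      S.le (r * S.pospart (x - algebraMap ℝ R l) * r) (ε • (1:R)) := by
    intro ε hε
    have hshift : x - algebraMap ℝ R (l + ε) = (x - algebraMap ℝ R l) - ε • (1:R) := by
      simp only [Algebra.algebraMap_eq_smul_one]
      module
    have hemem : S.pospart (x - algebraMap ℝ R (l + ε)) ∈ S.A :=
      S.pospart_mem (S.shift_mem hx (l + ε))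
    have her : S.pospart (x - algebraMap ℝ R (l + ε)) * r = 0 := hkey _ (by linarith)
    have hge : S.le (S.pospart (x - algebraMap ℝ R l)
        - S.pospart (x - algebraMap ℝ R (l + ε))) (ε • (1:R)) := by
      rw [hshift]
      exact S.pospart_smul_shift_ge hlmem (le_of_lt hε)
    have hgnn : S.le 0 (S.pospart (x - algebraMap ℝ R l)
        - S.pospart (x - algebraMap ℝ R (l + ε))) := by
      have hmono := S.pospart_smul_shift_le hlmem (le_of_lt hε)
      rw [← hshift] at hmono
      exact (S.le_sub_iff hemem hfmem).1 hmono
    have hgmem : S.pospart (x - algebraMap ℝ R l)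
        - S.pospart (x - algebraMap ℝ R (l + ε)) ∈ S.A := S.A.sub_mem hfmem hemem
    have hfeq : r * S.pospart (x - algebraMap ℝ R l) * r
        = r * (S.pospart (x - algebraMap ℝ R l) - S.pospart (x - algebraMap ℝ R (l + ε))) * r := by
      have e : r * (S.pospart (x - algebraMap ℝ R l) - S.pospart (x - algebraMap ℝ R (l + ε))) * r
          = r * S.pospart (x - algebraMap ℝ R l) * r
            - r * (S.pospart (x - algebraMap ℝ R (l + ε)) * r) := by noncomm_ring
      rw [e, her, mul_zero, sub_zero]
    rw [hfeq]
    have hq2 : S.le 0 (r * (ε • (1:R) - (S.pospart (x - algebraMap ℝ R l)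
        - S.pospart (x - algebraMap ℝ R (l + ε)))) * r) :=
      S.quad_nn r hr.1 _ (S.A.sub_mem (S.smul_one_mem ε) hgmem)
        (S.proj_nonneg hr) ((S.le_sub_iff hgmem (S.smul_one_mem ε)).1 hge)
    have e2 : r * (ε • (1:R) - (S.pospart (x - algebraMap ℝ R l)
        - S.pospart (x - algebraMap ℝ R (l + ε)))) * r
        = ε • r - r * (S.pospart (x - algebraMap ℝ R l)
            - S.pospart (x - algebraMap ℝ R (l + ε))) * r := by
      rw [mul_sub, sub_mul, mul_smul_comm, smul_mul_assoc, mul_one, hr.2]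
    rw [e2] at hq2
    have h5 : S.le (r * (S.pospart (x - algebraMap ℝ R l)
        - S.pospart (x - algebraMap ℝ R (l + ε))) * r) (ε • r) := by
      rw [S.le_sub_iff (S.quad_mem r hr.1 _ hgmem) (S.A.smul_mem _ hr.1)]
      exact hq2
    have h6 : S.le (ε • r) (ε • (1:R)) := by
      rw [S.le_sub_iff (S.A.smul_mem _ hr.1) (S.smul_one_mem ε)]
      rw [← smul_sub]
      exact S.smul_nonneg ε (le_of_lt hε) _ (S.A.sub_mem S.one_mem hr.1)
        (S.proj_nonneg (S.isProj_compl hr))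
    exact S.le_trans _ (S.quad_mem r hr.1 _ hgmem) _ (S.A.smul_mem _ hr.1) _
      (S.smul_one_mem ε) h5 h6
  have hle0 := S.le_zero_of_all_eps hqmem hbound
  have hzero : r * S.pospart (x - algebraMap ℝ R l) * r = 0 :=
    S.le_antisymm _ hqmem _ S.A.zero_mem hle0 hqnn
  obtain ⟨_, h5⟩ := S.quad_zero r hr.1 _ hfmem hfnn hzero
  have h6 : S.carr (S.pospart (x - algebraMap ℝ R l)) * r = 0 :=
    (S.carr_spec _ hfmem r hr.1).1 h5
  have h7 : r * S.carr (S.pospart (x - algebraMap ℝ R l)) = 0 :=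
    S.mul_zero_symm (S.carr_mem _ hfmem) hr.1 h6
  apply S.proj_le_of_mul hr (S.specProj_isProj hx l)
  · simp only [specProj]
    rw [mul_sub, mul_one, h7, sub_zero]
  · simp only [specProj]
    rw [sub_mul, one_mul, h6, sub_zero]

end Spec

end SynapticAlgebra
namespace SynapticAlgebra

section Effects

variable {R : Type*} [Ring R] [Algebra ℝ R] (S : SynapticAlgebra R) {x : R}

lemma carr_eq_one_of_inj (hx : x ∈ S.A) (hinv : ∀ u ∈ S.A, x * u = 0 → u = 0) :
    S.carr x = 1 := by
  have h1 : x * (1 - S.carr x) = 0 := by rw [mul_sub, mul_one, S.mul_carr hx, sub_self]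
  have h2 := hinv _ (S.A.sub_mem S.one_mem (S.carr_mem x hx)) h1
  exact (sub_eq_zero.mp h2).symm

lemma specProj_eq_zero (hx : x ∈ S.A) (h0 : S.le 0 x) {l : ℝ} (hl : l < 0) :
    S.specProj x l = 0 := by
  have hy : x - algebraMap ℝ R l ∈ S.A := S.shift_mem hx l
  have hynn : S.le 0 (x - algebraMap ℝ R l) := by
    have e : x - algebraMap ℝ R l = x + (-l) • (1:R) := by
      simp only [Algebra.algebraMap_eq_smul_one]; module
    rw [e]
    exact S.nonneg_add hx (S.smul_one_mem _) h0 (S.smul_one_nonneg (by linarith))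
  have hpos : S.pospart (x - algebraMap ℝ R l) = x - algebraMap ℝ R l :=
    S.pospart_of_nonneg hy hynn
  have hamem : (-l)⁻¹ • (x - algebraMap ℝ R l) ∈ S.A := S.A.smul_mem _ hy
  have ha1 : S.le 1 ((-l)⁻¹ • (x - algebraMap ℝ R l)) := by
    rw [S.le_sub_iff S.one_mem hamem]
    have hne : (-l) ≠ 0 := by intro hh; linarith [neg_eq_zero.mp hh]
    have e : (-l)⁻¹ • (x - algebraMap ℝ R l) - 1 = (-l)⁻¹ • x := by
      simp only [Algebra.algebraMap_eq_smul_one]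
      rw [smul_sub, smul_smul]
      have e2 : (-l)⁻¹ * l = -1 := by field_simp; rw [div_self hl.ne]
      rw [e2]; module
    rw [e]
    exact S.smul_nonneg _ (inv_nonneg.mpr (by linarith)) _ hx h0
  obtain ⟨b, hbmem, hab, hba⟩ := S.inv_exists _ hamem ha1
  have hinv : ∀ u ∈ S.A, (x - algebraMap ℝ R l) * u = 0 → u = 0 := by
    intro u hu hzero
    have h1 : ((-l)⁻¹ • (x - algebraMap ℝ R l)) * u = 0 := by
      rw [smul_mul_assoc, hzero, smul_zero]
    calc u = 1 * u := (one_mul u).symm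
    _ = (b * ((-l)⁻¹ • (x - algebraMap ℝ R l))) * u := by rw [hba]
    _ = b * (((-l)⁻¹ • (x - algebraMap ℝ R l)) * u) := by rw [mul_assoc]
    _ = 0 := by rw [h1, mul_zero]
  have hcarr := S.carr_eq_one_of_inj hy hinv
  simp only [specProj, hpos, hcarr, sub_self]

lemma specProj_eq_one (hx : x ∈ S.A) (h1 : S.le x 1) {l : ℝ} (hl : 1 ≤ l) :
    S.specProj x l = 1 := by
  have hy := S.shift_mem hx l
  have hle : S.le (x - algebraMap ℝ R l) 0 := by
    apply S.neg_nonpos hy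
    have e : -(x - algebraMap ℝ R l) = (l - 1) • (1:R) + (1 - x) := by
      simp only [Algebra.algebraMap_eq_smul_one]; module
    rw [e]
    exact S.nonneg_add (S.smul_one_mem _) (S.A.sub_mem S.one_mem hx)
      (S.smul_one_nonneg (by linarith)) ((S.le_sub_iff hx S.one_mem).1 h1)
  have hpos : S.pospart (x - algebraMap ℝ R l) = 0 := S.pospart_of_nonpos hy hle
  simp only [specProj, hpos, S.carr_zero, sub_zero]

lemma nonneg_of_specProj_zero (hx : x ∈ S.A) (h : ∀ l : ℝ, l < 0 → S.specProj x l = 0) :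
    S.le 0 x := by
  have key : ∀ l : ℝ, l < 0 → S.le 0 (x - algebraMap ℝ R l) := by
    intro l hl
    have hy := S.shift_mem hx l
    have hcarr : S.carr (S.pospart (x - algebraMap ℝ R l)) = 1 := by
      have h1 := h l hl
      simp only [specProj] at h1
      exact (sub_eq_zero.mp h1).symm
    have hmem2 : S.pospart (x - algebraMap ℝ R l) - (x - algebraMap ℝ R l) ∈ S.A :=
      S.A.sub_mem (S.pospart_mem hy) hy
    have h2 := (S.carr_spec _ (S.pospart_mem hy) _ hmem2).1 (S.pospart_mul_negpart hy)
    rw [hcarr, one_mul] at h2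
    have h3 := S.pospart_nonneg hy
    rwa [sub_eq_zero.mp h2] at h3
  have hneg : S.le (-x) 0 := by
    apply S.le_zero_of_all_eps (S.A.neg_mem hx)
    intro ε hε
    have h4 := key (-ε) (by linarith)
    rw [S.le_sub_iff (S.A.neg_mem hx) (S.smul_one_mem ε)]
    have e : ε • (1:R) - -x = x - algebraMap ℝ R (-ε) := by
      simp only [Algebra.algebraMap_eq_smul_one]; module
    rw [e]
    exact h4
  have h5 := (S.le_sub_iff (S.A.neg_mem hx) S.A.zero_mem).1 hneg
  rwa [zero_sub, neg_neg] at h5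

lemma le_one_of_specProj_one (hx : x ∈ S.A) (h : ∀ l : ℝ, 1 < l → S.specProj x l = 1) :
    S.le x 1 := by
  have key : ∀ l : ℝ, 1 < l → S.le x (l • (1:R)) := by
    intro l hl
    have hy := S.shift_mem hx l
    have hcarr : S.carr (S.pospart (x - algebraMap ℝ R l)) = 0 := by
      have h1 := h l hl
      simp only [specProj] at h1
      exact sub_eq_self.mp h1
    have hzero : S.pospart (x - algebraMap ℝ R l) = 0 := by
      have h2 := S.mul_carr (S.pospart_mem hy)
      rw [hcarr, mul_zero] at h2
      exact h2.symm
    have hle := S.le_pospart hy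
    rw [hzero] at hle
    rw [S.le_sub_iff hx (S.smul_one_mem l)]
    have h3 := (S.le_sub_iff hy S.A.zero_mem).1 hle
    rw [zero_sub] at h3
    have e : l • (1:R) - x = -(x - algebraMap ℝ R l) := by
      simp only [Algebra.algebraMap_eq_smul_one]; module
    rw [e]
    exact h3
  have h2 : S.le (x - 1) 0 := by
    apply S.le_zero_of_all_eps (S.A.sub_mem hx S.one_mem)
    intro ε hε
    have h4 := key (1 + ε) (by linarith)
    rw [S.le_sub_iff (S.A.sub_mem hx S.one_mem) (S.smul_one_mem ε)]
    have e : ε • (1:R) - (x - 1) = (1 + ε) • (1:R) - x := by module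
    rw [e]
    exact (S.le_sub_iff hx (S.smul_one_mem _)).1 h4
  have h5 := (S.le_sub_iff (S.A.sub_mem hx S.one_mem) S.A.zero_mem).1 h2
  rw [S.le_sub_iff hx S.one_mem]
  rwa [zero_sub, neg_sub] at h5

end Effects

end SynapticAlgebra
/-- In a Banach synaptic algebra, the element `d = a ∨ₛ b` whose spectral
resolution is `p_{a,λ} ∧ p_{b,λ}` is the supremum, and the element `c = a ∧ₛ b` whose
spectral resolution is `⋀_{μ>λ}(p_{a,μ} ∨ p_{b,μ})` is the infimum, of `a` and `b` in the
spectral order; hence `(A, ≤ₛ)` is a lattice, and `E` is a sublattice. -/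
theorem spectral_inf_sup {R : Type*} [Ring R] [Algebra ℝ R]
    (S : SynapticAlgebra R) (hB : S.IsBanach) (a b c d : R)
    (ha : a ∈ S.A) (hb : b ∈ S.A) (hc : c ∈ S.A) (hd : d ∈ S.A)
    (hdres : ∀ l : ℝ, S.IsProjInf (S.specProj d l) {S.specProj a l, S.specProj b l})
    (hcres : ∀ l : ℝ, S.IsProjInf (S.specProj c l)
      {x | ∃ μ : ℝ, l < μ ∧ S.IsProjSup x {S.specProj a μ, S.specProj b μ}}) :
    (S.specLE c a ∧ S.specLE c b ∧
      ∀ x ∈ S.A, S.specLE x a → S.specLE x b → S.specLE x c) ∧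
    (S.specLE a d ∧ S.specLE b d ∧
      ∀ x ∈ S.A, S.specLE a x → S.specLE b x → S.specLE d x) ∧
    (a ∈ S.effects → b ∈ S.effects → c ∈ S.effects ∧ d ∈ S.effects) := by
  refine ⟨⟨?_, ?_, ?_⟩, ⟨?_, ?_, ?_⟩, ?_⟩
  · -- c ≤ₛ a
    intro l
    refine (hcres l).2.2 _ (S.specProj_isProj ha l) ?_
    rintro t ⟨μ, hlμ, hsup⟩
    have h1 : S.le (S.specProj a μ) t := hsup.2.1 _ (by simp)
    have h2 := S.specProj_mono ha (le_of_lt hlμ)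
    exact S.le_trans _ (S.specProj_mem ha l) _ (S.specProj_mem ha μ) _ hsup.1.1 h2 h1
  · -- c ≤ₛ b
    intro l
    refine (hcres l).2.2 _ (S.specProj_isProj hb l) ?_
    rintro t ⟨μ, hlμ, hsup⟩
    have h1 : S.le (S.specProj b μ) t := hsup.2.1 _ (by simp)
    have h2 := S.specProj_mono hb (le_of_lt hlμ)
    exact S.le_trans _ (S.specProj_mem hb l) _ (S.specProj_mem hb μ) _ hsup.1.1 h2 h1
  · -- glb
    intro y hy hya hyb l
    apply S.specProj_right_cont hy (hcres l).1
    intro μ hμ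
    have hsup := S.sup_proj (S.specProj_isProj ha μ) (S.specProj_isProj hb μ)
    have h1 : S.le (S.specProj c l) (S.carr (S.specProj a μ + S.specProj b μ)) :=
      (hcres l).2.1 _ ⟨μ, hμ, hsup⟩
    have h2 : S.le (S.carr (S.specProj a μ + S.specProj b μ)) (S.specProj y μ) := by
      refine hsup.2.2 _ (S.specProj_isProj hy μ) ?_
      intro t ht
      simp only [Set.mem_insert_iff, Set.mem_singleton_iff] at ht
      rcases ht with rfl | rfl
      · exact hya μ
      · exact hyb μ
    exact S.le_trans _ (S.specProj_mem hc l) _ hsup.1.1 _ (S.specProj_mem hy μ) h1 h2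
  · -- a ≤ₛ d
    intro l
    exact (hdres l).2.1 _ (by simp)
  · -- b ≤ₛ d
    intro l
    exact (hdres l).2.1 _ (by simp)
  · -- lub
    intro y hy hay hby l
    refine (hdres l).2.2 _ (S.specProj_isProj hy l) ?_
    intro t ht
    simp only [Set.mem_insert_iff, Set.mem_singleton_iff] at ht
    rcases ht with rfl | rfl
    · exact hay l
    · exact hby l
  · -- effects
    intro hae hbe
    constructor
    · -- c ∈ E
      refine ⟨hc, ?_, ?_⟩
      · apply S.nonneg_of_specProj_zero hc
        intro l hl
        have hmem0 : (0:R) ∈ {x | ∃ μ : ℝ, l < μ ∧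
            S.IsProjSup x {S.specProj a μ, S.specProj b μ}} := by
          refine ⟨l/2, by linarith, ?_⟩
          rw [S.specProj_eq_zero ha hae.2.1 (by linarith : l/2 < 0),
            S.specProj_eq_zero hb hbe.2.1 (by linarith : l/2 < 0)]
          refine ⟨S.isProj_zero, ?_, ?_⟩
          · intro t ht
            simp only [Set.mem_insert_iff, Set.mem_singleton_iff, or_self] at ht
            rw [ht]
            exact S.le_refl 0 S.A.zero_mem
          · intro r hrp _
            exact S.proj_nonneg hrp
        have hle0 : S.le (S.specProj c l) 0 := (hcres l).2.1 0 hmem0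
        exact S.le_antisymm _ (S.specProj_mem hc l) _ S.A.zero_mem hle0
          (S.proj_nonneg (hcres l).1)
      · apply S.le_one_of_specProj_one hc
        intro l hl
        have hub1 : S.le 1 (S.specProj c l) := by
          refine (hcres l).2.2 1 S.isProj_one ?_
          rintro t ⟨μ, hμ, hsup⟩
          have h1 : S.le (S.specProj a μ) t := hsup.2.1 _ (by simp)
          rwa [S.specProj_eq_one ha hae.2.2 (by linarith : (1:ℝ) ≤ μ)] at h1
        exact (S.le_antisymm _ (S.specProj_mem hc l) _ S.one_mem
          (S.proj_le_one (hcres l).1) hub1)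
    · -- d ∈ E
      refine ⟨hd, ?_, ?_⟩
      · apply S.nonneg_of_specProj_zero hd
        intro l hl
        have h0 := (hdres l).2.1 (S.specProj a l) (by simp)
        rw [S.specProj_eq_zero ha hae.2.1 hl] at h0
        exact S.le_antisymm _ (S.specProj_mem hd l) _ S.A.zero_mem h0
          (S.proj_nonneg (hdres l).1)
      · apply S.le_one_of_specProj_one hd
        intro l hl
        have h1 : S.le 1 (S.specProj d l) := by
          refine (hdres l).2.2 1 S.isProj_one ?_
          intro t ht
          simp only [Set.mem_insert_iff, Set.mem_singleton_iff] at ht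
          rcases ht with rfl | rfl
          · rw [S.specProj_eq_one ha hae.2.2 (le_of_lt hl)]
            exact S.le_refl 1 S.one_mem
          · rw [S.specProj_eq_one hb hbe.2.2 (le_of_lt hl)]
            exact S.le_refl 1 S.one_mem
        exact S.le_antisymm _ (S.specProj_mem hd l) _ S.one_mem
          (S.proj_le_one (hdres l).1) h1
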